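/- arXiv:1101.3938 — 2 statements merged into one kernel-verified Lean document; each statement's English description precedes it below -/
import Mathlib

section
/- Let k be an algebraically closed field, m, n, r integers with 0 ≤ r ≤ m and r ≤ n, and let E_r ∈ Mat_{m×n}(k) be the matrix with (E_r)_{ij} = 1 if i = j ≤ r and 0 otherwise. Let X ∈ Mat_{m×n}(k) with rank X ≤ r. Then there exist an invertible lower triangular matrix A ∈ GL_m(k) and an invertible upper triangular matrix B ∈ GL_n(k) with X = A·E_r·B⁻¹ if and only if for every i with 1 ≤ i ≤ r the i-th leading principal minor of X (the determinant of the submatrix formed by the first i rows and the first i columns of X) is nonzero. -/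
open Matrix

private lemma sumCast {M : Type*} [AddCommMonoid M] {i m : ℕ} (h : i ≤ m) (f : Fin m → M)
    (hf : ∀ t : Fin m, i ≤ (t : ℕ) → f t = 0) :
    ∑ t, f t = ∑ s : Fin i, f (Fin.castLE h s) := by
  classical
  have h1 := Finset.sum_map Finset.univ ⟨Fin.castLE h, Fin.castLE_injective h⟩ f
  simp only [Function.Embedding.coeFn_mk] at h1
  rw [← h1]
  refine (Finset.sum_subset (Finset.subset_univ _) ?_).symm
  intro t _ ht
  refine hf t ?_
  by_contra hlt
  push_neg at hlt
  exact ht (Finset.mem_map.mpr ⟨⟨(t : ℕ), hlt⟩, Finset.mem_univ _, Fin.ext rfl⟩)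

private lemma detLowerTri {k : Type*} [CommRing k] {i : ℕ} (T : Matrix (Fin i) (Fin i) k)
    (hT : ∀ a b : Fin i, (a : ℕ) < (b : ℕ) → T a b = 0) : T.det = ∏ s, T s s := by
  apply Matrix.det_of_lowerTriangular
  intro a b hab
  exact hT a b hab

private lemma detUpperTri {k : Type*} [CommRing k] {i : ℕ} (T : Matrix (Fin i) (Fin i) k)
    (hT : ∀ a b : Fin i, (b : ℕ) < (a : ℕ) → T a b = 0) : T.det = ∏ s, T s s := by
  apply Matrix.det_of_upperTriangular
  intro a b hab
  exact hT a b hab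

private lemma subLowerMul {k : Type*} [CommRing k] {i m n : ℕ} (him : i ≤ m)
    (A : Matrix (Fin m) (Fin m) k) (hA : ∀ a b : Fin m, (a : ℕ) < (b : ℕ) → A a b = 0)
    (N : Matrix (Fin m) (Fin n) k) (g : Fin i → Fin n) :
    (A * N).submatrix (Fin.castLE him) g
      = A.submatrix (Fin.castLE him) (Fin.castLE him) * N.submatrix (Fin.castLE him) g := by
  ext p q
  simp only [Matrix.submatrix_apply, Matrix.mul_apply]
  refine sumCast him (fun t => A (Fin.castLE him p) t * N t (g q)) ?_
  intro t ht
  show A (Fin.castLE him p) t * N t (g q) = 0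
  rw [hA _ _ (lt_of_lt_of_le p.isLt ht), zero_mul]

private lemma subMulUpper {k : Type*} [CommRing k] {i m n : ℕ} (hin : i ≤ n)
    (C : Matrix (Fin n) (Fin n) k) (hC : ∀ a b : Fin n, (b : ℕ) < (a : ℕ) → C a b = 0)
    (N : Matrix (Fin m) (Fin n) k) (g : Fin i → Fin m) :
    (N * C).submatrix g (Fin.castLE hin)
      = N.submatrix g (Fin.castLE hin) * C.submatrix (Fin.castLE hin) (Fin.castLE hin) := by
  ext p q
  simp only [Matrix.submatrix_apply, Matrix.mul_apply]
  refine sumCast hin (fun t => N (g p) t * C t (Fin.castLE hin q)) ?_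
  intro t ht
  show N (g p) t * C t (Fin.castLE hin q) = 0
  rw [hC _ _ (lt_of_lt_of_le q.isLt ht), mul_zero]

private lemma keyLU {k : Type*} [Field k] (r : ℕ) :
    ∀ {m n : ℕ} (hrm : r ≤ m) (hrn : r ≤ n) (X : Matrix (Fin m) (Fin n) k),
      X.rank ≤ r →
      (∀ (i : ℕ) (hi : i ≤ r), 1 ≤ i →
        (X.submatrix (Fin.castLE (hi.trans hrm)) (Fin.castLE (hi.trans hrn))).det ≠ 0) →
      ∃ (L : Matrix (Fin m) (Fin r) k) (U : Matrix (Fin r) (Fin n) k),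
        (∀ (a : Fin m) (b : Fin r), (a : ℕ) < (b : ℕ) → L a b = 0) ∧
        (∀ (a : Fin r) (b : Fin n), (b : ℕ) < (a : ℕ) → U a b = 0) ∧
        (∀ s : Fin r, L (Fin.castLE hrm s) s ≠ 0) ∧
        (∀ s : Fin r, U s (Fin.castLE hrn s) ≠ 0) ∧
        X = L * U := by
  induction r with
  | zero =>
    intro m n hrm hrn X hXr _
    have hX0 : X = 0 := by
      have h1 : Module.finrank k (LinearMap.range X.mulVecLin) = 0 := Nat.le_zero.mp hXr
      have h2 : LinearMap.range X.mulVecLin = ⊥ := Submodule.finrank_eq_zero.mp h1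
      have h3 : X.mulVecLin = 0 := LinearMap.range_eq_bot.mp h2
      ext p q
      have h4 : X.mulVec (Pi.single q 1) = 0 := by
        have := LinearMap.congr_fun h3 (Pi.single q 1)
        simpa using this
      have h5 := congrFun h4 p
      simpa using h5
    refine ⟨0, 0, ?_, ?_, ?_, ?_, ?_⟩
    · intro a b; exact b.elim0
    · intro a b; exact a.elim0
    · intro s; exact s.elim0
    · intro s; exact s.elim0
    · rw [hX0]
      ext p q
      simp [Matrix.mul_apply]
  | succ r ih =>
    intro m n hrm hrn X hXr hmin
    obtain ⟨m', rfl⟩ : ∃ m', m = m' + 1 := ⟨m - 1, by omega⟩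
    obtain ⟨n', rfl⟩ : ∃ n', n = n' + 1 := ⟨n - 1, by omega⟩
    have hrm' : r ≤ m' := by omega
    have hrn' : r ≤ n' := by omega
    set a : k := X 0 0 with ha_def
    have ha : a ≠ 0 := by
      have h1 := hmin 1 (by omega) le_rfl
      rw [Matrix.det_fin_one] at h1
      have e0m : Fin.castLE (show (1:ℕ) ≤ m' + 1 by omega) (0 : Fin 1) = (0 : Fin (m' + 1)) :=
        Fin.ext (by simp)
      have e0n : Fin.castLE (show (1:ℕ) ≤ n' + 1 by omega) (0 : Fin 1) = (0 : Fin (n' + 1)) :=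
        Fin.ext (by simp)
      simpa [Matrix.submatrix_apply, e0m, e0n, ha_def] using h1
    set S' : Matrix (Fin m') (Fin n') k :=
      Matrix.of (fun p q => X p.succ q.succ - X p.succ 0 * X 0 q.succ / a) with hS'_def
    -- rank bound for S'
    have hS'rank : S'.rank ≤ r := by
      classical
      set W := LinearMap.range X.mulVecLin with hW
      set φ : (Fin (m' + 1) → k) →ₗ[k] k := LinearMap.proj 0 with hφ
      set V := W ⊓ LinearMap.ker φ with hV
      have hVW : V < W := by
        refine lt_of_le_of_ne inf_le_left ?_
        intro hEq
        have hmem : X.mulVec (Pi.single 0 1) ∈ W := LinearMap.mem_range_self _ _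
        rw [← hEq] at hmem
        have h2 : (X *ᵥ Pi.single 0 1) 0 = 0 := hmem.2
        simp only [Matrix.mulVec_single, mul_one, Pi.smul_apply, MulOpposite.op_one, one_smul,
          Matrix.col_apply] at h2
        exact ha h2
      have hVfin : Module.finrank k V ≤ r := by
        have h1 : Module.finrank k (V : Submodule k (Fin (m' + 1) → k))
            < Module.finrank k (W : Submodule k (Fin (m' + 1) → k)) :=
          Submodule.finrank_lt_finrank_of_lt hVW
        have h2 : Module.finrank k (W : Submodule k (Fin (m' + 1) → k)) = X.rank := rfl
        omega
      set π : (Fin (m' + 1) → k) →ₗ[k] (Fin m' → k) := LinearMap.funLeft k k Fin.succ with hπ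
      have hrange : LinearMap.range S'.mulVecLin ≤ V.map π := by
        rintro _ ⟨y, rfl⟩
        set w : Fin (n' + 1) → k :=
          Fin.cons (-(∑ q : Fin n', X 0 q.succ * y q) / a) y with hw
        refine Submodule.mem_map.mpr ⟨X.mulVec w, ⟨LinearMap.mem_range_self _ _, ?_⟩, ?_⟩
        · show (X *ᵥ w) 0 = 0
          show ∑ t, X 0 t * w t = 0
          rw [Fin.sum_univ_succ]
          simp only [hw, Fin.cons_zero, Fin.cons_succ, ← ha_def]
          field_simp
          ring
        · funext p
          show (X.mulVec w) p.succ = S'.mulVec y p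
          show ∑ t, X p.succ t * w t = ∑ q, S' p q * y q
          rw [Fin.sum_univ_succ]
          simp only [hw, Fin.cons_zero, Fin.cons_succ, hS'_def, Matrix.of_apply]
          have hq : ∀ q : Fin n',
              (X p.succ q.succ - X p.succ 0 * X 0 q.succ / a) * y q
                = X p.succ q.succ * y q - X p.succ 0 / a * (X 0 q.succ * y q) := by
            intro q; ring
          simp_rw [hq]
          rw [Finset.sum_sub_distrib, ← Finset.mul_sum]
          ring
      have h6 : S'.rank ≤ Module.finrank k (V.map π) := Submodule.finrank_mono hrange
      have h7 : Module.finrank k (V.map π) ≤ Module.finrank k V := Submodule.finrank_map_le π V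
      omega
    -- minors of S'
    have hS'min : ∀ (i : ℕ) (hi : i ≤ r), 1 ≤ i →
        (S'.submatrix (Fin.castLE (hi.trans hrm')) (Fin.castLE (hi.trans hrn'))).det ≠ 0 := by
      intro i hi hi1
      have him : i + 1 ≤ m' + 1 := by omega
      have hin : i + 1 ≤ n' + 1 := by omega
      set Y : Matrix (Fin (i + 1)) (Fin (i + 1)) k :=
        X.submatrix (Fin.castLE him) (Fin.castLE hin) with hY_def
      have hYdet : Y.det ≠ 0 := hmin (i + 1) (by omega) (by omega)
      have e0m : Fin.castLE him (0 : Fin (i + 1)) = (0 : Fin (m' + 1)) := Fin.ext (by simp)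
      have e0n : Fin.castLE hin (0 : Fin (i + 1)) = (0 : Fin (n' + 1)) := Fin.ext (by simp)
      have hY00 : Y 0 0 = a := by rw [hY_def]; simp [Matrix.submatrix_apply, e0m, e0n, ha_def]
      set P : Matrix (Fin (i + 1)) (Fin (i + 1)) k :=
        Matrix.of (fun p q =>
          (if p = q then (1 : k) else 0) - (if q = 0 ∧ p ≠ 0 then Y p 0 / a else 0)) with hP_def
      set Z : Matrix (Fin (i + 1)) (Fin (i + 1)) k := P * Y with hZ_def
      have hZ : ∀ p q, Z p q = Y p q - (if p = 0 then 0 else Y p 0 / a * Y 0 q) := by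
        intro p q
        rw [hZ_def, Matrix.mul_apply]
        simp only [hP_def, Matrix.of_apply, sub_mul, ite_mul, one_mul, zero_mul,
          Finset.sum_sub_distrib]
        congr 1
        · rw [Finset.sum_ite_eq]
          simp
        · by_cases hp : p = 0
          · simp [hp]
          · simp only [hp, ne_eq, not_false_eq_true, and_true]
            rw [Finset.sum_ite_eq']
            simp
      have hPlow : ∀ p q : Fin (i + 1), (p : ℕ) < (q : ℕ) → P p q = 0 := by
        intro p q hpq
        have h1 : p ≠ q := by intro h; rw [h] at hpq; omega
        have h2 : ¬(q = 0 ∧ p ≠ 0) := by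
          rintro ⟨rfl, -⟩; simp at hpq
        simp [hP_def, h1, h2]
      have hPdet : P.det = 1 := by
        rw [detLowerTri P hPlow]
        have : ∀ s : Fin (i + 1), P s s = 1 := by
          intro s; simp [hP_def]
        simp [this]
      have hZdet : Z.det = Y.det := by rw [hZ_def, Matrix.det_mul, hPdet, one_mul]
      have hZcol : ∀ p : Fin i, Z p.succ 0 = 0 := by
        intro p
        rw [hZ (p.succ) 0]
        simp [Fin.succ_ne_zero, hY00, div_mul_cancel₀ _ ha]
      have hsubZ : Z.submatrix Fin.succ Fin.succ
          = S'.submatrix (Fin.castLE (hi.trans hrm')) (Fin.castLE (hi.trans hrn')) := by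
        ext p q
        rw [Matrix.submatrix_apply, hZ]
        have e1 : Fin.castLE him p.succ = (Fin.castLE (hi.trans hrm') p).succ :=
          Fin.ext (by simp)
        have e2 : Fin.castLE hin q.succ = (Fin.castLE (hi.trans hrn') q).succ :=
          Fin.ext (by simp)
        simp only [Fin.succ_ne_zero, if_false, hY_def, Matrix.submatrix_apply, e0m, e0n, e1, e2,
          hS'_def, Matrix.of_apply]
        ring
      have hZexp : Z.det = a * (S'.submatrix (Fin.castLE (hi.trans hrm'))
          (Fin.castLE (hi.trans hrn'))).det := by
        rw [Matrix.det_succ_column_zero, Fin.sum_univ_succ]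
        have h1 : ∀ p : Fin i,
            (-1 : k) ^ ((p.succ : Fin (i + 1)) : ℕ) * Z p.succ 0
              * (Z.submatrix (Fin.succAbove p.succ) Fin.succ).det = 0 := by
          intro p; rw [hZcol p]; ring
        rw [Finset.sum_congr rfl (fun p _ => h1 p), Finset.sum_const, smul_zero, add_zero]
        have h2 : Z 0 0 = a := by rw [hZ]; simp [hY00]
        rw [h2, Fin.succAbove_zero, hsubZ]
        simp
      intro hcon
      rw [← hZdet, hZexp, hcon, mul_zero] at hYdet
      exact hYdet rfl
    obtain ⟨L', U', hL'low, hU'up, hL'diag, hU'diag, hS'LU⟩ :=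
      ih hrm' hrn' S' hS'rank hS'min
    -- build L and U
    set L : Matrix (Fin (m' + 1)) (Fin (r + 1)) k :=
      Matrix.of (fun p s =>
        Fin.cases (Fin.cases a (fun _ => (0 : k)) s)
          (fun p' => Fin.cases (X p'.succ 0) (fun s' => L' p' s') s) p) with hL_def
    set U : Matrix (Fin (r + 1)) (Fin (n' + 1)) k :=
      Matrix.of (fun s q =>
        Fin.cases (Fin.cases (1 : k) (fun q' => X 0 q'.succ / a) q)
          (fun s' => Fin.cases (0 : k) (fun q' => U' s' q') q) s) with hU_def
    have hL0 : ∀ s, L 0 s = Fin.cases a (fun _ => (0 : k)) s := fun s => by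
      simp [hL_def]
    have hLsucc : ∀ p' s, L p'.succ s
        = Fin.cases (X p'.succ 0) (fun s' => L' p' s') s := fun p' s => by
      simp [hL_def]
    have hU0 : ∀ q, U 0 q = Fin.cases (1 : k) (fun q' => X 0 q'.succ / a) q := fun q => by
      simp [hU_def]
    have hUsucc : ∀ s' q, U s'.succ q
        = Fin.cases (0 : k) (fun q' => U' s' q') q := fun s' q => by
      simp [hU_def]
    refine ⟨L, U, ?_, ?_, ?_, ?_, ?_⟩
    · -- L lower triangular
      intro p s hps
      induction s using Fin.cases with
      | zero => simp at hps
      | succ s' =>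
        induction p using Fin.cases with
        | zero => rw [hL0]; simp
        | succ p' =>
          rw [hLsucc]
          simp only [Fin.cases_succ]
          exact hL'low p' s' (by simpa using hps)
    · -- U upper triangular
      intro s q hqs
      induction s using Fin.cases with
      | zero => simp at hqs
      | succ s' =>
        induction q using Fin.cases with
        | zero => rw [hUsucc]; simp
        | succ q' =>
          rw [hUsucc]
          simp only [Fin.cases_succ]
          exact hU'up s' q' (by simpa using hqs)
    · -- L diagonal nonzero
      intro s
      induction s using Fin.cases with
      | zero =>
        have e : Fin.castLE hrm (0 : Fin (r + 1)) = (0 : Fin (m' + 1)) := Fin.ext (by simp)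
        rw [e, hL0]; simpa using ha
      | succ s' =>
        have e : Fin.castLE hrm s'.succ = (Fin.castLE hrm' s').succ := Fin.ext (by simp)
        rw [e, hLsucc]
        simpa using hL'diag s'
    · -- U diagonal nonzero
      intro s
      induction s using Fin.cases with
      | zero =>
        have e : Fin.castLE hrn (0 : Fin (r + 1)) = (0 : Fin (n' + 1)) := Fin.ext (by simp)
        rw [e, hU0]; simp
      | succ s' =>
        have e : Fin.castLE hrn s'.succ = (Fin.castLE hrn' s').succ := Fin.ext (by simp)
        rw [e, hUsucc]
        simpa using hU'diag s'
    · -- X = L * U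
      ext p q
      rw [Matrix.mul_apply, Fin.sum_univ_succ]
      induction p using Fin.cases with
      | zero =>
        induction q using Fin.cases with
        | zero =>
          rw [hL0, hU0]
          simp only [Fin.cases_zero]
          have : ∀ s' : Fin r, L 0 s'.succ * U s'.succ 0 = 0 := by
            intro s'; rw [hL0, hUsucc]; simp
          rw [Finset.sum_congr rfl (fun s' _ => this s'), Finset.sum_const, smul_zero, add_zero]
          simp [ha_def]
        | succ q' =>
          rw [hL0, hU0]
          simp only [Fin.cases_zero, Fin.cases_succ]
          have : ∀ s' : Fin r, L 0 s'.succ * U s'.succ q'.succ = 0 := by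
            intro s'; rw [hL0]; simp
          rw [Finset.sum_congr rfl (fun s' _ => this s'), Finset.sum_const, smul_zero, add_zero]
          rw [mul_div_cancel₀ _ ha]
      | succ p' =>
        induction q using Fin.cases with
        | zero =>
          rw [hLsucc, hU0]
          simp only [Fin.cases_zero]
          have : ∀ s' : Fin r, L p'.succ s'.succ * U s'.succ 0 = 0 := by
            intro s'; rw [hUsucc]; simp
          rw [Finset.sum_congr rfl (fun s' _ => this s'), Finset.sum_const, smul_zero, add_zero]
          ring
        | succ q' =>
          rw [hLsucc, hU0]
          simp only [Fin.cases_zero, Fin.cases_succ]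
          have hterm : ∀ s' : Fin r, L p'.succ s'.succ * U s'.succ q'.succ
              = L' p' s' * U' s' q' := by
            intro s'; rw [hLsucc, hUsucc]; simp
          rw [Finset.sum_congr rfl (fun s' _ => hterm s')]
          have hS : ∑ s', L' p' s' * U' s' q' = S' p' q' := by
            rw [hS'LU, Matrix.mul_apply]
          rw [hS]
          simp only [hS'_def, Matrix.of_apply]
          ring

/-- A matrix `X` of rank `≤ r` can be written as `X = A · E_r · B⁻¹` with `A ∈ GL_m(k)`
lower triangular and `B ∈ GL_n(k)` upper triangular if and only if its first `r`
leading principal minors are nonzero. -/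
theorem stmt5 (k : Type*) [Field k] [IsAlgClosed k] (m n r : ℕ) (hrm : r ≤ m) (hrn : r ≤ n)
    (E : Matrix (Fin m) (Fin n) k)
    (hE : E = Matrix.of fun (i : Fin m) (j : Fin n) => if (i : ℕ) = (j : ℕ) ∧ (i : ℕ) < r then (1 : k) else 0)
    (X : Matrix (Fin m) (Fin n) k) (hX : X.rank ≤ r) :
    (∃ (A : Matrix (Fin m) (Fin m) k) (B : Matrix (Fin n) (Fin n) k),
        IsUnit A ∧ IsUnit B ∧
        (∀ i j : Fin m, (i : ℕ) < (j : ℕ) → A i j = 0) ∧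
        (∀ i j : Fin n, (j : ℕ) < (i : ℕ) → B i j = 0) ∧
        X = A * E * B⁻¹) ↔
      (∀ (i : ℕ) (hi : i ≤ r), 1 ≤ i →
        (X.submatrix (Fin.castLE (hi.trans hrm)) (Fin.castLE (hi.trans hrn))).det ≠ 0) := by
  classical
  constructor
  · rintro ⟨A, B, hAu, hBu, hA, hB, hXf⟩ i hi hi1
    have hBdet : IsUnit B.det := (Matrix.isUnit_iff_isUnit_det B).mp hBu
    haveI := B.invertibleOfIsUnitDet hBdet
    set C := B⁻¹ with hC_def
    have hC : ∀ a b : Fin n, (b : ℕ) < (a : ℕ) → C a b = 0 := by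
      have h1 : B.BlockTriangular id := fun a b hab => hB a b hab
      have h2 := Matrix.blockTriangular_inv_of_blockTriangular h1
      intro a b hab
      exact h2 hab
    have him := hi.trans hrm
    have hin := hi.trans hrn
    have hsub1 : (A * E * C).submatrix (Fin.castLE him) (Fin.castLE hin)
        = (A * E).submatrix (Fin.castLE him) (Fin.castLE hin)
          * C.submatrix (Fin.castLE hin) (Fin.castLE hin) :=
      subMulUpper hin C hC (A * E) (Fin.castLE him)
    have hsub2 : (A * E).submatrix (Fin.castLE him) (Fin.castLE hin)
        = A.submatrix (Fin.castLE him) (Fin.castLE him)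
          * E.submatrix (Fin.castLE him) (Fin.castLE hin) :=
      subLowerMul him A hA E (Fin.castLE hin)
    have hsubE : E.submatrix (Fin.castLE him) (Fin.castLE hin) = (1 : Matrix (Fin i) (Fin i) k) := by
      ext p q
      rw [hE]
      by_cases hpq : p = q
      · subst hpq
        have : (p : ℕ) < r := lt_of_lt_of_le p.isLt hi
        simp [Matrix.one_apply, this]
      · have : ¬((p : ℕ) = (q : ℕ)) := fun h => hpq (Fin.ext h)
        simp [Matrix.one_apply, hpq, this]
    have hAdiag : ∀ t : Fin m, A t t ≠ 0 := by
      have hdetA : A.det ≠ 0 := ((Matrix.isUnit_iff_isUnit_det A).mp hAu).ne_zero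
      rw [detLowerTri A hA] at hdetA
      intro t
      exact Finset.prod_ne_zero_iff.mp hdetA t (Finset.mem_univ t)
    have hCdiag : ∀ t : Fin n, C t t ≠ 0 := by
      have hdetC : C.det ≠ 0 := by
        rw [hC_def, Matrix.det_nonsing_inv]
        simpa [Ring.inverse_eq_inv'] using inv_ne_zero hBdet.ne_zero
      rw [detUpperTri C hC] at hdetC
      intro t
      exact Finset.prod_ne_zero_iff.mp hdetC t (Finset.mem_univ t)
    rw [hXf, hsub1, hsub2, hsubE, Matrix.mul_one, Matrix.det_mul]
    apply mul_ne_zero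
    · rw [detLowerTri (A.submatrix (Fin.castLE him) (Fin.castLE him))
        (fun p q hpq => hA _ _ (by simpa using hpq))]
      exact Finset.prod_ne_zero_iff.mpr fun s _ => hAdiag _
    · rw [detUpperTri (C.submatrix (Fin.castLE hin) (Fin.castLE hin))
        (fun p q hpq => hC _ _ (by simpa using hpq))]
      exact Finset.prod_ne_zero_iff.mpr fun s _ => hCdiag _
  · intro hmin
    obtain ⟨L, U, hLlow, hUup, hLdiag, hUdiag, hXLU⟩ := keyLU r hrm hrn X hX hmin
    set A : Matrix (Fin m) (Fin m) k :=
      Matrix.of (fun p j => if h : (j : ℕ) < r then L p ⟨(j : ℕ), h⟩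
        else if p = j then (1 : k) else 0) with hA_def
    set C : Matrix (Fin n) (Fin n) k :=
      Matrix.of (fun p j => if h : (p : ℕ) < r then U ⟨(p : ℕ), h⟩ j
        else if p = j then (1 : k) else 0) with hC_def
    have hAlow : ∀ p j : Fin m, (p : ℕ) < (j : ℕ) → A p j = 0 := by
      intro p j hpj
      rw [hA_def]
      simp only [Matrix.of_apply]
      by_cases h : (j : ℕ) < r
      · rw [dif_pos h]
        exact hLlow p ⟨(j : ℕ), h⟩ hpj
      · rw [dif_neg h, if_neg (fun he => by rw [he] at hpj; omega)]
    have hCup : ∀ p j : Fin n, (j : ℕ) < (p : ℕ) → C p j = 0 := by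
      intro p j hjp
      rw [hC_def]
      simp only [Matrix.of_apply]
      by_cases h : (p : ℕ) < r
      · rw [dif_pos h]
        exact hUup ⟨(p : ℕ), h⟩ j hjp
      · rw [dif_neg h, if_neg (fun he => by rw [he] at hjp; omega)]
    have hAdiag : ∀ p : Fin m, A p p ≠ 0 := by
      intro p
      rw [hA_def]
      simp only [Matrix.of_apply]
      by_cases h : (p : ℕ) < r
      · rw [dif_pos h]
        have e : Fin.castLE hrm (⟨(p : ℕ), h⟩ : Fin r) = p := Fin.ext rfl
        have := hLdiag ⟨(p : ℕ), h⟩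
        rwa [e] at this
      · rw [dif_neg h]
        simp
    have hCdiag : ∀ p : Fin n, C p p ≠ 0 := by
      intro p
      rw [hC_def]
      simp only [Matrix.of_apply]
      by_cases h : (p : ℕ) < r
      · rw [dif_pos h]
        have e : Fin.castLE hrn (⟨(p : ℕ), h⟩ : Fin r) = p := Fin.ext rfl
        have := hUdiag ⟨(p : ℕ), h⟩
        rwa [e] at this
      · rw [dif_neg h]
        simp
    have hAdet : A.det ≠ 0 := by
      rw [detLowerTri A hAlow]
      exact Finset.prod_ne_zero_iff.mpr fun s _ => hAdiag _
    have hCdet : C.det ≠ 0 := by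
      rw [detUpperTri C hCup]
      exact Finset.prod_ne_zero_iff.mpr fun s _ => hCdiag _
    have hAu : IsUnit A := (Matrix.isUnit_iff_isUnit_det A).mpr (isUnit_iff_ne_zero.mpr hAdet)
    have hCu : IsUnit C := (Matrix.isUnit_iff_isUnit_det C).mpr (isUnit_iff_ne_zero.mpr hCdet)
    haveI := C.invertibleOfIsUnitDet (isUnit_iff_ne_zero.mpr hCdet)
    refine ⟨A, C⁻¹, hAu, ?_, hAlow, ?_, ?_⟩
    · rw [Matrix.isUnit_iff_isUnit_det, Matrix.det_nonsing_inv]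
      simpa [Ring.inverse_eq_inv'] using
        isUnit_iff_ne_zero.mpr (inv_ne_zero hCdet)
    · -- C⁻¹ is upper triangular
      have h1 : C.BlockTriangular id := fun a b hab => hCup a b hab
      have h2 := Matrix.blockTriangular_inv_of_blockTriangular h1
      intro p j hjp
      exact h2 hjp
    · rw [Matrix.nonsing_inv_nonsing_inv C (isUnit_iff_ne_zero.mpr hCdet)]
      -- X = A * E * C
      have hAE : ∀ (p : Fin m) (q : Fin n),
          (A * E) p q = if h : (q : ℕ) < r then L p ⟨(q : ℕ), h⟩ else 0 := by
        intro p q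
        rw [Matrix.mul_apply, hE]
        by_cases hq : (q : ℕ) < r
        · rw [dif_pos hq]
          rw [Finset.sum_eq_single (⟨(q : ℕ), lt_of_lt_of_le hq hrm⟩ : Fin m)]
          · simp [hA_def, hq]
          · intro t _ ht
            simp only [Matrix.of_apply]
            rw [if_neg, mul_zero]
            rintro ⟨h1, h2⟩
            exact ht (Fin.ext h1)
          · intro h; exact absurd (Finset.mem_univ _) h
        · rw [dif_neg hq]
          apply Finset.sum_eq_zero
          intro t _
          simp only [Matrix.of_apply]
          rw [if_neg, mul_zero]
          rintro ⟨h1, h2⟩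
          rw [h1] at h2
          exact hq h2
      ext p j
      rw [hXLU, Matrix.mul_apply, Matrix.mul_apply]
      rw [sumCast hrn (fun q => (A * E) p q * C q j) ?van]
      case van =>
        intro t ht
        show (A * E) p t * C t j = 0
        rw [hAE, dif_neg (by omega), zero_mul]
      apply Finset.sum_congr rfl
      intro s _
      rw [hAE, dif_pos (by simpa using s.isLt)]
      have e1 : (⟨((Fin.castLE hrn s : Fin n) : ℕ), by simpa using s.isLt⟩ : Fin r) = s :=
        Fin.ext rfl
      rw [e1]
      congr 1
      rw [hC_def]
      simp only [Matrix.of_apply]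
      rw [dif_pos (by simpa using s.isLt)]
      congr 1
end

section
/- Let k be an algebraically closed field and l, m, n, r, s integers with 0 ≤ r ≤ l, 0 ≤ s ≤ n and r + s ≤ m. Let E ∈ Mat_{l×m}(k) have E_{ij} = 1 iff i = j ≤ r and F ∈ Mat_{m×n}(k) have F_{ij} = 1 iff i > m−s, j > n−s and i − (m−s) = j − (n−s), all other entries being 0. For (g₁, g₂, g₃) ∈ GL_l(k) × GL_m(k) × GL_n(k), one has g₁·E·g₂⁻¹ = E and g₂·F·g₃⁻¹ = F if and only if: (g₁)_{ij} = 0 whenever i > r and j ≤ r; (g₂)_{ij} = 0 whenever (i ≤ r and j > r) or (i ≤ m−s and j > m−s); (g₃)_{ij} = 0 whenever i > n−s and j ≤ n−s; (g₁)_{ij} = (g₂)_{ij} for all i, j ≤ r; and (g₂)_{m−s+i, m−s+j} = (g₃)_{n−s+i, n−s+j} for all 1 ≤ i, j ≤ s. -/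
open Matrix

set_option maxHeartbeats 1000000

/-- Computation of the stabiliser of the base point `E_{rs} = (E, F)` of the variety of
complexes in `GL_l(k) × GL_m(k) × GL_n(k)`. -/
theorem stmt6 (k : Type*) [Field k] [IsAlgClosed k] (l m n r s : ℕ)
    (hrl : r ≤ l) (hsn : s ≤ n) (hrsm : r + s ≤ m)
    (E : Matrix (Fin l) (Fin m) k)
    (hE : E = Matrix.of fun (i : Fin l) (j : Fin m) => if (i : ℕ) = (j : ℕ) ∧ (i : ℕ) < r then (1 : k) else 0)
    (F : Matrix (Fin m) (Fin n) k)
    (hF : F = Matrix.of fun (i : Fin m) (j : Fin n) =>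
      if m - s ≤ (i : ℕ) ∧ n - s ≤ (j : ℕ) ∧ (i : ℕ) - (m - s) = (j : ℕ) - (n - s)
        then (1 : k) else 0)
    (g₁ : Matrix (Fin l) (Fin l) k) (g₂ : Matrix (Fin m) (Fin m) k)
    (g₃ : Matrix (Fin n) (Fin n) k)
    (h₁ : IsUnit g₁) (h₂ : IsUnit g₂) (h₃ : IsUnit g₃) :
    (g₁ * E * g₂⁻¹ = E ∧ g₂ * F * g₃⁻¹ = F) ↔
      ((∀ i j : Fin l, r ≤ (i : ℕ) → (j : ℕ) < r → g₁ i j = 0) ∧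
       (∀ i j : Fin m,
         (((i : ℕ) < r ∧ r ≤ (j : ℕ)) ∨ ((i : ℕ) < m - s ∧ m - s ≤ (j : ℕ))) → g₂ i j = 0) ∧
       (∀ i j : Fin n, n - s ≤ (i : ℕ) → (j : ℕ) < n - s → g₃ i j = 0) ∧
       (∀ (i j : ℕ) (hi : i < r) (hj : j < r),
         g₁ ⟨i, hi.trans_le hrl⟩ ⟨j, hj.trans_le hrl⟩ =
           g₂ ⟨i, by omega⟩ ⟨j, by omega⟩) ∧
       (∀ (i j : ℕ) (hi : i < s) (hj : j < s),
         g₂ ⟨m - s + i, by omega⟩ ⟨m - s + j, by omega⟩ =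
           g₃ ⟨n - s + i, by omega⟩ ⟨n - s + j, by omega⟩)) := by
  haveI := h₂.invertible
  haveI := h₃.invertible
  have key1 : g₁ * E * g₂⁻¹ = E ↔ g₁ * E = E * g₂ := by
    constructor
    · intro h
      conv_rhs => rw [← h]
      rw [Matrix.mul_assoc, Matrix.inv_mul_of_invertible, Matrix.mul_one]
    · intro h; rw [h, Matrix.mul_assoc, Matrix.mul_inv_of_invertible, Matrix.mul_one]
  have key2 : g₂ * F * g₃⁻¹ = F ↔ g₂ * F = F * g₃ := by
    constructor
    · intro h
      conv_rhs => rw [← h]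
      rw [Matrix.mul_assoc, Matrix.inv_mul_of_invertible, Matrix.mul_one]
    · intro h; rw [h, Matrix.mul_assoc, Matrix.mul_inv_of_invertible, Matrix.mul_one]
  rw [key1, key2]
  -- entrywise formulas
  have hGE : ∀ (i : Fin l) (j : Fin m),
      (g₁ * E) i j = if h : (j : ℕ) < r then g₁ i ⟨j, h.trans_le hrl⟩ else 0 := by
    intro i j
    rw [Matrix.mul_apply]
    split
    · next h =>
      rw [Finset.sum_eq_single (⟨(j : ℕ), h.trans_le hrl⟩ : Fin l)]
      · simp [hE, h]
      · intro t _ ht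
        simp only [hE, Matrix.of_apply]
        rw [if_neg, mul_zero]
        rintro ⟨h1, -⟩
        exact ht (Fin.ext h1)
      · intro h'; exact absurd (Finset.mem_univ _) h'
    · next h =>
      apply Finset.sum_eq_zero
      intro t _
      simp only [hE, Matrix.of_apply]
      rw [if_neg, mul_zero]
      rintro ⟨h1, h2⟩; omega
  have hEG : ∀ (i : Fin l) (j : Fin m),
      (E * g₂) i j = if h : (i : ℕ) < r then g₂ ⟨i, by omega⟩ j else 0 := by
    intro i j
    rw [Matrix.mul_apply]
    split
    · next h =>
      rw [Finset.sum_eq_single (⟨(i : ℕ), by omega⟩ : Fin m)]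
      · simp [hE, h]
      · intro t _ ht
        simp only [hE, Matrix.of_apply]
        rw [if_neg, zero_mul]
        rintro ⟨h1, -⟩
        exact ht (Fin.ext h1.symm)
      · intro h'; exact absurd (Finset.mem_univ _) h'
    · next h =>
      apply Finset.sum_eq_zero
      intro t _
      simp only [hE, Matrix.of_apply]
      rw [if_neg, zero_mul]
      rintro ⟨h1, h2⟩; omega
  have hGF : ∀ (i : Fin m) (j : Fin n),
      (g₂ * F) i j = if h : n - s ≤ (j : ℕ) then
        g₂ i ⟨m - s + ((j : ℕ) - (n - s)), by have := j.isLt; omega⟩ else 0 := by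
    intro i j
    rw [Matrix.mul_apply]
    split
    · next h =>
      rw [Finset.sum_eq_single (⟨m - s + ((j : ℕ) - (n - s)), by have := j.isLt; omega⟩ : Fin m)]
      · simp only [hF, Matrix.of_apply]
        rw [if_pos, mul_one]
        refine ⟨by omega, h, by omega⟩
      · intro t _ ht
        simp only [hF, Matrix.of_apply]
        rw [if_neg, mul_zero]
        rintro ⟨h1, h2, h3⟩
        exact ht (Fin.ext (show (t:ℕ) = m - s + ((j:ℕ) - (n - s)) by omega))
      · intro h'; exact absurd (Finset.mem_univ _) h'
    · next h =>
      apply Finset.sum_eq_zero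
      intro t _
      simp only [hF, Matrix.of_apply]
      rw [if_neg, mul_zero]
      rintro ⟨h1, h2, h3⟩; omega
  have hFG : ∀ (i : Fin m) (j : Fin n),
      (F * g₃) i j = if h : m - s ≤ (i : ℕ) then
        g₃ ⟨n - s + ((i : ℕ) - (m - s)), by have := i.isLt; omega⟩ j else 0 := by
    intro i j
    rw [Matrix.mul_apply]
    split
    · next h =>
      rw [Finset.sum_eq_single (⟨n - s + ((i : ℕ) - (m - s)), by have := i.isLt; omega⟩ : Fin n)]
      · simp only [hF, Matrix.of_apply]
        rw [if_pos, one_mul]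
        refine ⟨h, by omega, by omega⟩
      · intro t _ ht
        simp only [hF, Matrix.of_apply]
        rw [if_neg, zero_mul]
        rintro ⟨h1, h2, h3⟩
        exact ht (Fin.ext (show (t:ℕ) = n - s + ((i:ℕ) - (m - s)) by omega))
      · intro h'; exact absurd (Finset.mem_univ _) h'
    · next h =>
      apply Finset.sum_eq_zero
      intro t _
      simp only [hF, Matrix.of_apply]
      rw [if_neg, zero_mul]
      rintro ⟨h1, h2, h3⟩; omega
  constructor
  · rintro ⟨hA, hB⟩
    have hA' : ∀ (i : Fin l) (j : Fin m), (g₁ * E) i j = (E * g₂) i j := fun i j => by rw [hA]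
    have hB' : ∀ (i : Fin m) (j : Fin n), (g₂ * F) i j = (F * g₃) i j := fun i j => by rw [hB]
    refine ⟨?_, ?_, ?_, ?_, ?_⟩
    · -- g₁ lower-left block zero
      intro i j hi hj
      have := hA' i ⟨(j : ℕ), by omega⟩
      rw [hGE, hEG, dif_pos (show ((⟨(j : ℕ), by omega⟩ : Fin m) : ℕ) < r from hj),
        dif_neg (by simpa using not_lt.2 hi)] at this
      simpa using this
    · -- g₂ conditions
      rintro i j (⟨hi, hj⟩ | ⟨hi, hj⟩)
      · have := hA' ⟨(i : ℕ), by omega⟩ j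
        rw [hGE, hEG, dif_neg (by simpa using not_lt.2 hj),
          dif_pos (show ((⟨(i : ℕ), by omega⟩ : Fin l) : ℕ) < r from hi)] at this
        rw [show (⟨((⟨(i : ℕ), by omega⟩ : Fin l) : ℕ), i.isLt⟩ : Fin m) = i from Fin.ext rfl]
          at this
        exact this.symm
      · have hj' : (j : ℕ) - (m - s) < s := by have := j.isLt; omega
        have := hB' i ⟨n - s + ((j : ℕ) - (m - s)), by omega⟩
        rw [hGF, hFG, dif_pos (show n - s ≤ n - s + ((j : ℕ) - (m - s)) by omega),
          dif_neg (by simpa using not_le.2 hi)] at this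
        rw [show (⟨m - s + ((((⟨n - s + ((j : ℕ) - (m - s)), by omega⟩ : Fin n)) : ℕ) - (n - s)),
            by have := j.isLt; omega⟩ : Fin m) = j from Fin.ext (by simp; omega)] at this
        exact this
    · -- g₃ lower-left block zero
      intro i j hi hj
      have hi' : (i : ℕ) - (n - s) < s := by have := i.isLt; omega
      have := hB' ⟨m - s + ((i : ℕ) - (n - s)), by omega⟩ j
      rw [hGF, hFG, dif_neg (by simpa using not_le.2 hj),
        dif_pos (show m - s ≤ m - s + ((i : ℕ) - (n - s)) by omega)] at this
      rw [show (⟨n - s + ((((⟨m - s + ((i : ℕ) - (n - s)), by omega⟩ : Fin m)) : ℕ) - (m - s)),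
          by omega⟩ : Fin n) = i from Fin.ext (by simp; omega)] at this
      exact this.symm
    · -- top-left blocks agree
      intro i j hi hj
      have := hA' ⟨i, by omega⟩ ⟨j, by omega⟩
      rw [hGE, hEG, dif_pos (show ((⟨j, by omega⟩ : Fin m) : ℕ) < r from hj),
        dif_pos (show ((⟨i, by omega⟩ : Fin l) : ℕ) < r from hi)] at this
      convert this using 2 <;> exact Fin.ext rfl
    · -- bottom-right blocks agree
      intro i j hi hj
      have := hB' ⟨m - s + i, by omega⟩ ⟨n - s + j, by omega⟩
      rw [hGF, hFG, dif_pos (show n - s ≤ ((⟨n - s + j, by omega⟩ : Fin n) : ℕ) by simp),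
        dif_pos (show m - s ≤ ((⟨m - s + i, by omega⟩ : Fin m) : ℕ) by simp)] at this
      convert this using 2 <;> exact Fin.ext (by simp)
  · rintro ⟨c1, c2, c3, c4, c5⟩
    constructor
    · ext i j
      rw [hGE, hEG]
      by_cases hj : (j : ℕ) < r <;> by_cases hi : (i : ℕ) < r
      · rw [dif_pos hj, dif_pos hi]
        have := c4 i j hi hj
        convert this using 2 <;> exact Fin.ext rfl
      · rw [dif_pos hj, dif_neg hi]
        exact c1 i ⟨j, by omega⟩ (by omega) hj
      · rw [dif_neg hj, dif_pos hi]
        exact (c2 ⟨i, by omega⟩ j (Or.inl ⟨hi, by omega⟩)).symm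
      · rw [dif_neg hj, dif_neg hi]
    · ext i j
      rw [hGF, hFG]
      by_cases hj : n - s ≤ (j : ℕ) <;> by_cases hi : m - s ≤ (i : ℕ)
      · rw [dif_pos hj, dif_pos hi]
        have h1 : (i : ℕ) - (m - s) < s := by have := i.isLt; omega
        have h2 : (j : ℕ) - (n - s) < s := by have := j.isLt; omega
        have := c5 ((i : ℕ) - (m - s)) ((j : ℕ) - (n - s)) h1 h2
        convert this using 2 <;> exact Fin.ext (by simp; omega)
      · rw [dif_pos hj, dif_neg hi]
        exact c2 i ⟨m - s + ((j : ℕ) - (n - s)), by have := j.isLt; omega⟩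
          (Or.inr ⟨by omega, by simp⟩)
      · rw [dif_neg hj, dif_pos hi]
        exact (c3 ⟨n - s + ((i : ℕ) - (m - s)), by have := i.isLt; omega⟩ j (by simp) (by omega)).symm
      · rw [dif_neg hj, dif_neg hi]
end
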